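/- Let 𝒮 ⊆ 2^V be simple and separator-free and let 𝒮' be obtained from 𝒮 by adding the set B\A for each minimal A ∈ 𝒮 and maximal B ∈ 𝒮 with A ⊊ B and B\A ∉ 𝒮. Then 𝒮' is cut-free: no nontrivial subset C of V (2 ≤ |C| ≤ |V|−1) satisfies that no member of 𝒮' intersects C. -/

import Mathlib

def MinimalIn {V : Type*} (𝒮 : Set (Set V)) (A : Set V) : Prop :=
  A ∈ 𝒮 ∧ ∀ A' ∈ 𝒮, A' ⊆ A → A' = A

def MaximalIn {V : Type*} (𝒮 : Set (Set V)) (B : Set V) : Prop :=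
  B ∈ 𝒮 ∧ ∀ B' ∈ 𝒮, B ⊆ B' → B' = B

/-- No two distinct elements belong to exactly the same members of `𝒮`. -/
def SimpleFam {V : Type*} (𝒮 : Set (Set V)) : Prop :=
  ∀ u v : V, (∀ S ∈ 𝒮, (u ∈ S ↔ v ∈ S)) → u = v

def IsSeparator {V : Type*} (𝒮 : Set (Set V)) (C : Set V) : Prop :=
  C.Nonempty ∧ C ≠ Set.univ ∧ ∀ S ∈ 𝒮, S ⊆ C ∨ Disjoint S C

def SeparatorFree {V : Type*} (𝒮 : Set (Set V)) : Prop :=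
  ¬ ∃ C : Set V, IsSeparator 𝒮 C

/-- `S` intersects `C` (crossingly). -/
def Crosses {V : Type*} (S C : Set V) : Prop :=
  (S ∩ C).Nonempty ∧ (C \ S).Nonempty ∧ (S \ C).Nonempty

/-- A cut of a family `ℱ`: a subset `C` with `2 ≤ |C| ≤ |V|-1` that no member
of `ℱ` intersects crossingly. -/
def IsCut {V : Type*} [Fintype V] (ℱ : Set (Set V)) (C : Set V) : Prop :=
  2 ≤ C.ncard ∧ C.ncard ≤ Fintype.card V - 1 ∧ ∀ S ∈ ℱ, ¬ Crosses S C

def CutFree {V : Type*} [Fintype V] (ℱ : Set (Set V)) : Prop :=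
  ¬ ∃ C : Set V, IsCut ℱ C

/-- The augmented family `𝒮'`. -/
def AugFam {V : Type*} (𝒮 : Set (Set V)) : Set (Set V) :=
  𝒮 ∪ {T | ∃ A B : Set V, MinimalIn 𝒮 A ∧ MaximalIn 𝒮 B ∧ A ⊂ B ∧ B \ A ∉ 𝒮 ∧ T = B \ A}

/-- For a simple separator-free family `𝒮`, the augmented family `𝒮'` is cut-free. -/
theorem augFam_cutFree
    {V : Type*} [Fintype V]
    (𝒮 : Set (Set V)) (hne : ∅ ∉ 𝒮)
    (hsimple : SimpleFam 𝒮) (hsf : SeparatorFree 𝒮) :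
    CutFree (AugFam 𝒮) := by
  rintro ⟨C, h2, hle, hcross⟩
  -- C is nonempty and proper
  have hCfin : C.Finite := Set.toFinite C
  have hCne : C.Nonempty := by
    rw [Set.nonempty_iff_ne_empty]
    rintro rfl; simp [Set.ncard_empty] at h2
  have hCuniv : C ≠ Set.univ := by
    rintro rfl
    rw [Set.ncard_univ, Nat.card_eq_fintype_card] at hle h2
    omega
  -- two distinct elements of C
  obtain ⟨u, hu, v, hv, huv⟩ := (Set.one_lt_ncard hCfin).1 (by omega)
  -- a member of 𝒮 separating u from v gives S₀ ∈ 𝒮 with S₀ ⊊ C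
  have hsep : ∃ S₀ ∈ 𝒮, S₀ ⊆ C ∧ S₀ ≠ C := by
    by_contra hcon
    push_neg at hcon
    apply huv
    apply hsimple
    intro S hS
    by_contra hiff
    -- S contains exactly one of u, v; show S ⊆ C
    have hScross := hcross S (Or.inl hS)
    have hSC : S ⊆ C := by
      by_contra hsub
      obtain ⟨x, hxS, hxC⟩ := Set.not_subset.1 hsub
      apply hScross
      rcases Classical.em (u ∈ S) with hus | hus
      · have hvs : v ∉ S := fun hvs => hiff ⟨fun _ => hvs, fun _ => hus⟩
        exact ⟨⟨u, hus, hu⟩, ⟨v, hv, hvs⟩, ⟨x, hxS, hxC⟩⟩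
      · have hvs : v ∈ S := by
          by_contra hvs; exact hiff ⟨fun h => absurd h hus, fun h => absurd h hvs⟩
        exact ⟨⟨v, hvs, hv⟩, ⟨u, hu, hus⟩, ⟨x, hxS, hxC⟩⟩
    have hSeqC : S = C := hcon S hS hSC
    subst hSeqC
    rcases Classical.em (u ∈ S) with hus | hus
    · exact hiff ⟨fun _ => hv, fun _ => hus⟩
    · exact absurd hu hus
  obtain ⟨S₀, hS₀, hS₀C, hS₀ne⟩ := hsep
  -- C is not a separator: get S₁ ∈ 𝒮 with C ⊊ S₁
  have hsep1 : ∃ S₁ ∈ 𝒮, C ⊆ S₁ ∧ C ≠ S₁ := by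
    by_contra hcon
    push_neg at hcon
    apply hsf
    refine ⟨C, hCne, hCuniv, fun S hS => ?_⟩
    have hScross := hcross S (Or.inl hS)
    by_contra hnot
    push_neg at hnot
    obtain ⟨hns, hnd⟩ := hnot
    obtain ⟨x, hxS, hxC⟩ := Set.not_subset.1 hns
    rw [Set.not_disjoint_iff] at hnd
    obtain ⟨y, hyS, hyC⟩ := hnd
    have hCS : C ⊆ S := by
      by_contra hcs
      obtain ⟨z, hzC, hzS⟩ := Set.not_subset.1 hcs
      exact hScross ⟨⟨y, hyS, hyC⟩, ⟨z, hzC, hzS⟩, ⟨x, hxS, hxC⟩⟩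
    exact hxC (hcon S hS hCS ▸ hxS)
  obtain ⟨S₁, hS₁, hCS₁, hCS₁ne⟩ := hsep1
  -- a minimal element A of 𝒮 with A ⊆ S₀
  obtain ⟨A, ⟨hA𝒮, hAS₀⟩, hAmin⟩ :=
    Set.Finite.exists_minimalFor (id : Set V → Set V) {S | S ∈ 𝒮 ∧ S ⊆ S₀}
      (Set.toFinite _) ⟨S₀, hS₀, subset_rfl⟩
  have hAminIn : MinimalIn 𝒮 A :=
    ⟨hA𝒮, fun A' hA' hsub => Set.Subset.antisymm hsub (hAmin ⟨hA', hsub.trans hAS₀⟩ hsub)⟩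
  -- a maximal element B of 𝒮 with S₁ ⊆ B
  obtain ⟨B, ⟨hB𝒮, hS₁B⟩, hBmax⟩ :=
    Set.Finite.exists_maximalFor (id : Set V → Set V) {S | S ∈ 𝒮 ∧ S₁ ⊆ S}
      (Set.toFinite _) ⟨S₁, hS₁, subset_rfl⟩
  have hBmaxIn : MaximalIn 𝒮 B :=
    ⟨hB𝒮, fun B' hB' hsub => Set.Subset.antisymm (hBmax ⟨hB', hS₁B.trans hsub⟩ hsub) hsub⟩
  have hAC : A ⊆ C := hAS₀.trans hS₀C
  have hCB : C ⊆ B := hCS₁.trans hS₁B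
  have hAB : A ⊂ B := by
    refine ⟨hAC.trans hCB, fun hBA => ?_⟩
    obtain ⟨x, hxS₁, hxC⟩ := Set.not_subset.1 (fun h => hCS₁ne (Set.Subset.antisymm hCS₁ h))
    exact hxC (hAC (hBA (hS₁B hxS₁)))
  -- D = B \ A is in the augmented family
  have hD : B \ A ∈ AugFam 𝒮 := by
    by_cases hBA : B \ A ∈ 𝒮
    · exact Or.inl hBA
    · exact Or.inr ⟨A, B, hAminIn, hBmaxIn, hAB, hBA, rfl⟩
  -- D crosses C, contradiction
  apply hcross (B \ A) hD
  have hAne : A.Nonempty := by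
    rw [Set.nonempty_iff_ne_empty]; rintro rfl; exact hne hA𝒮
  obtain ⟨a, ha⟩ := hAne
  obtain ⟨w, hwC, hwS₀⟩ := Set.not_subset.1 (fun h => hS₀ne (Set.Subset.antisymm hS₀C h))
  obtain ⟨x, hxS₁, hxC⟩ := Set.not_subset.1 (fun h => hCS₁ne (Set.Subset.antisymm hCS₁ h))
  refine ⟨⟨w, ⟨hCB hwC, fun hwA => hwS₀ (hAS₀ hwA)⟩, hwC⟩,
    ⟨a, hAC ha, fun hmem => hmem.2 ha⟩,
    ⟨x, ⟨hS₁B hxS₁, fun hxA => hxC (hAC hxA)⟩, hxC⟩⟩
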